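/- Let β and γ be real numbers with 0 < β < γ, let μ be a Borel probability measure on ℝ with μ([-β, β]) = 1, let F be the cumulative distribution function of μ, and define g(y) = (F(y+γ) - F(y-γ))/(2γ). Then -∫_ℝ g(y) log₂ g(y) dy = log₂(2γ) - (1/(2γ)) ∫_{-β}^{β} ( F(y) log₂ F(y) + (1 - F(y)) log₂(1 - F(y)) ) dy. -/

import Mathlib

open MeasureTheory

theorem entropy_of_smoothed_cdf_eq (β γ : ℝ) (hβ : 0 < β) (hβγ : β < γ)
    (μ : Measure ℝ) [IsProbabilityMeasure μ] (hμ : μ (Set.Icc (-β) β) = 1)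
    (F : ℝ → ℝ) (hF : ∀ x, F x = (μ (Set.Iic x)).toReal)
    (g : ℝ → ℝ) (hg : ∀ y, g y = (F (y + γ) - F (y - γ)) / (2 * γ)) :
    -∫ y, g y * Real.logb 2 (g y)
      = Real.logb 2 (2 * γ)
        - (1 / (2 * γ)) * ∫ y in (-β)..β,
            (F y * Real.logb 2 (F y) + (1 - F y) * Real.logb 2 (1 - F y)) := by
  have hγ : (0:ℝ) < γ := hβ.trans hβγ
  have h2γ : (0:ℝ) < 2 * γ := by linarith
  have h2γ' : (2:ℝ) * γ ≠ 0 := ne_of_gt h2γ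
  -- basic properties of F
  have hFmono : Monotone F := by
    intro a b hab
    rw [hF a, hF b]
    exact ENNReal.toReal_mono (measure_ne_top μ _) (measure_mono (Set.Iic_subset_Iic.2 hab))
  have hF0 : ∀ x, 0 ≤ F x := fun x => by rw [hF]; exact ENNReal.toReal_nonneg
  have hF1 : ∀ x, F x ≤ 1 := fun x => by
    rw [hF]
    simpa using ENNReal.toReal_mono ENNReal.one_ne_top prob_le_one
  have hFzero : ∀ x, x < -β → F x = 0 := by
    intro x hx
    rw [hF]
    have hc : μ (Set.Icc (-β) β)ᶜ = 0 := by
      rw [prob_compl_eq_zero_iff measurableSet_Icc]; exact hμ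
    have hz : μ (Set.Iic x) = 0 := by
      refine measure_mono_null (fun y hy => ?_) hc
      simp only [Set.mem_compl_iff, Set.mem_Icc, not_and, not_le]
      intro h1
      have hyx : y ≤ x := hy
      linarith
    simp [hz]
  have hFone : ∀ x, β ≤ x → F x = 1 := by
    intro x hx
    rw [hF]
    have h1 : μ (Set.Iic x) = 1 := by
      refine le_antisymm prob_le_one ?_
      rw [← hμ]
      exact measure_mono fun y hy => le_trans hy.2 hx
    simp [h1]
  have hg0 : ∀ y, 0 ≤ g y := fun y => by
    rw [hg]
    apply div_nonneg _ (le_of_lt h2γ)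
    have := hFmono (show y - γ ≤ y + γ by linarith)
    linarith
  have hgle : ∀ y, g y ≤ 1 / (2 * γ) := fun y => by
    rw [hg]
    exact div_le_div_of_nonneg_right (by linarith [hF1 (y + γ), hF0 (y - γ)]) h2γ.le
  -- measurability
  have hFm : Measurable F := hFmono.measurable
  have hlogm : ∀ {f : ℝ → ℝ}, Measurable f → Measurable fun y => Real.logb 2 (f y) := by
    intro f hf
    simpa [Real.logb] using (Real.measurable_log.comp hf).div_const (Real.log 2)
  have hgm : Measurable g := by
    have : g = fun y => (F (y + γ) - F (y - γ)) / (2 * γ) := funext hg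
    rw [this]
    exact ((hFm.comp (measurable_id.add_const γ)).sub
      (hFm.comp (measurable_id.sub_const γ))).div_const _
  have hhm : Measurable fun y => g y * Real.logb 2 (g y) := hgm.mul (hlogm hgm)
  -- uniform bound for t ↦ t * logb 2 t on [0, 1/(2γ)+1]
  have hcont : Continuous fun t : ℝ => t * Real.logb 2 t := by
    simpa [Real.logb, mul_div_assoc] using Real.continuous_mul_log.div_const (Real.log 2)
  obtain ⟨C, hC⟩ := (isCompact_Icc (a := (0:ℝ)) (b := 1/(2*γ) + 1)).exists_bound_of_continuousOn
    hcont.continuousOn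
  have hCval : ∀ t : ℝ, 0 ≤ t → t ≤ 1/(2*γ) + 1 → ‖t * Real.logb 2 t‖ ≤ C :=
    fun t h1 h2 => hC t ⟨h1, h2⟩
  have hbound : ∀ y, ‖g y * Real.logb 2 (g y)‖ ≤ C := fun y =>
    hCval _ (hg0 y) (by linarith [hgle y])
  -- the integrand vanishes outside a compact interval
  have hhz : ∀ y, y ∉ Set.Icc (-β - γ) (β + γ) → g y * Real.logb 2 (g y) = 0 := by
    intro y hy
    rw [Set.mem_Icc, not_and_or, not_le, not_le] at hy
    have hgy : g y = 0 := by
      rw [hg]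
      rcases hy with hy | hy
      · rw [hFzero (y + γ) (by linarith), hFzero (y - γ) (by linarith)]
        simp
      · rw [hFone (y + γ) (by linarith), hFone (y - γ) (by linarith)]
        simp
    simp [hgy]
  have hind : (fun y => g y * Real.logb 2 (g y))
      = (Set.Icc (-β - γ) (β + γ)).indicator (fun y => g y * Real.logb 2 (g y)) := by
    funext y
    by_cases hy : y ∈ Set.Icc (-β - γ) (β + γ)
    · rw [Set.indicator_of_mem hy]
    · rw [Set.indicator_of_notMem hy, hhz y hy]
  have hInt : Integrable (fun y => g y * Real.logb 2 (g y)) := by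
    rw [hind, integrable_indicator_iff measurableSet_Icc]
    exact Measure.integrableOn_of_bounded measure_Icc_lt_top.ne hhm.aestronglyMeasurable
      (Filter.Eventually.of_forall hbound)
  have hii : ∀ a b : ℝ, IntervalIntegrable (fun y => g y * Real.logb 2 (g y)) volume a b :=
    fun a b => hInt.intervalIntegrable
  -- restrict the integral to [-β-γ, β+γ]
  have key : ∫ y, g y * Real.logb 2 (g y)
      = ∫ y in (-β - γ)..(β + γ), g y * Real.logb 2 (g y) := by
    rw [intervalIntegral.integral_of_le (by linarith), ← integral_Icc_eq_integral_Ioc]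
    conv_lhs => rw [hind]
    rw [integral_indicator measurableSet_Icc]
  -- piece 1
  have hpiece1 : ∫ y in (-β - γ)..(β - γ), g y * Real.logb 2 (g y)
      = ∫ u in (-β)..β, (F u / (2*γ)) * Real.logb 2 (F u / (2*γ)) := by
    have heq : ∀ y ∈ Set.uIcc (-β - γ) (β - γ), g y * Real.logb 2 (g y)
        = (fun u => (F u / (2*γ)) * Real.logb 2 (F u / (2*γ))) (y + γ) := by
      intro y hy
      rw [Set.uIcc_of_le (by linarith)] at hy
      have h1 : F (y - γ) = 0 := hFzero _ (by linarith [hy.2])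
      simp only
      rw [hg, h1, sub_zero]
    rw [intervalIntegral.integral_congr heq]
    have h2 := intervalIntegral.integral_comp_add_right (a := -β - γ) (b := β - γ)
      (fun u => (F u / (2*γ)) * Real.logb 2 (F u / (2*γ))) γ
    rw [show -β - γ + γ = -β from by ring, show β - γ + γ = β from by ring] at h2
    exact h2
  -- piece 3
  have hpiece3 : ∫ y in (γ - β)..(β + γ), g y * Real.logb 2 (g y)
      = ∫ u in (-β)..β, ((1 - F u) / (2*γ)) * Real.logb 2 ((1 - F u) / (2*γ)) := by
    have heq : ∀ y ∈ Set.uIcc (γ - β) (β + γ), g y * Real.logb 2 (g y)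
        = (fun u => ((1 - F u) / (2*γ)) * Real.logb 2 ((1 - F u) / (2*γ))) (y - γ) := by
      intro y hy
      rw [Set.uIcc_of_le (by linarith)] at hy
      have h1 : F (y + γ) = 1 := hFone _ (by linarith [hy.1])
      simp only
      rw [hg, h1]
    rw [intervalIntegral.integral_congr heq]
    have h2 := intervalIntegral.integral_comp_sub_right (a := γ - β) (b := β + γ)
      (fun u => ((1 - F u) / (2*γ)) * Real.logb 2 ((1 - F u) / (2*γ))) γ
    rw [show γ - β - γ = -β from by ring, show β + γ - γ = β from by ring] at h2
    exact h2
  -- piece 2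
  have hpiece2 : ∫ y in (β - γ)..(γ - β), g y * Real.logb 2 (g y)
      = -((2*(γ-β)) * ((1/(2*γ)) * Real.logb 2 (2*γ))) := by
    rw [intervalIntegral.integral_of_le (by linarith), integral_Ioc_eq_integral_Ioo]
    rw [setIntegral_congr_fun measurableSet_Ioo
      (g := fun _ => (1/(2*γ)) * Real.logb 2 (1/(2*γ))) ?_]
    · rw [setIntegral_const, Real.volume_real_Ioo_of_le (by linarith),
        smul_eq_mul, one_div, Real.logb_inv]
      ring
    · intro y hy
      have h1 : F (y + γ) = 1 := hFone _ (by linarith [hy.1.le])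
      have h2 : F (y - γ) = 0 := hFzero _ (by linarith [hy.2])
      simp only
      rw [hg, h1, h2]
      norm_num
  -- interval integrability helper
  have hIvI : ∀ (f : ℝ → ℝ), Measurable f → (∀ u, ‖f u‖ ≤ C) →
      IntervalIntegrable f volume (-β) β := by
    intro f hf hb
    rw [intervalIntegrable_iff]
    exact Measure.integrableOn_of_bounded measure_Ioc_lt_top.ne hf.aestronglyMeasurable
      (Filter.Eventually.of_forall hb)
  have hm1 : Measurable fun u => (F u / (2*γ)) * Real.logb 2 (F u / (2*γ)) :=
    (hFm.div_const _).mul (hlogm (hFm.div_const _))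
  have hm2 : Measurable fun u => ((1 - F u) / (2*γ)) * Real.logb 2 ((1 - F u) / (2*γ)) :=
    (((measurable_const.sub hFm)).div_const _).mul (hlogm ((measurable_const.sub hFm).div_const _))
  have hb1 : ∀ u, ‖(F u / (2*γ)) * Real.logb 2 (F u / (2*γ))‖ ≤ C := by
    intro u
    refine hCval _ (div_nonneg (hF0 u) h2γ.le) ?_
    have h1 : F u / (2*γ) ≤ 1 / (2*γ) := div_le_div_of_nonneg_right (hF1 u) h2γ.le
    linarith
  have hb2 : ∀ u, ‖((1 - F u) / (2*γ)) * Real.logb 2 ((1 - F u) / (2*γ))‖ ≤ C := by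
    intro u
    refine hCval _ (div_nonneg (by linarith [hF1 u]) h2γ.le) ?_
    have h1 : (1 - F u) / (2*γ) ≤ 1 / (2*γ) := div_le_div_of_nonneg_right (by linarith [hF0 u]) h2γ.le
    linarith
  have hi1 : IntervalIntegrable (fun u => (F u / (2*γ)) * Real.logb 2 (F u / (2*γ)))
      volume (-β) β := hIvI _ hm1 hb1
  have hi2 : IntervalIntegrable (fun u => ((1 - F u) / (2*γ)) * Real.logb 2 ((1 - F u) / (2*γ)))
      volume (-β) β := hIvI _ hm2 hb2
  -- pointwise algebraic identity
  have keyid : ∀ t : ℝ, 0 ≤ t → (t/(2*γ)) * Real.logb 2 (t/(2*γ))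
      = (1/(2*γ)) * (t * Real.logb 2 t) - (1/(2*γ)) * (t * Real.logb 2 (2*γ)) := by
    intro t ht
    rcases eq_or_lt_of_le ht with h | h
    · simp [← h]
    · rw [Real.logb_div (ne_of_gt h) h2γ']
      ring
  have hcomb : ∀ u : ℝ, (F u / (2*γ)) * Real.logb 2 (F u / (2*γ))
        + ((1 - F u) / (2*γ)) * Real.logb 2 ((1 - F u) / (2*γ))
      = (1/(2*γ)) * (F u * Real.logb 2 (F u) + (1 - F u) * Real.logb 2 (1 - F u))
        - (1/(2*γ)) * Real.logb 2 (2*γ) := by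
    intro u
    rw [keyid (F u) (hF0 u), keyid (1 - F u) (by linarith [hF1 u])]
    ring
  -- integrability of the target integrand
  have hm3 : Measurable fun u => (1/(2*γ)) * (F u * Real.logb 2 (F u)
      + (1 - F u) * Real.logb 2 (1 - F u)) :=
    (((hFm.mul (hlogm hFm)).add
      ((measurable_const.sub hFm).mul (hlogm (measurable_const.sub hFm)))).const_mul _)
  have hi3 : IntervalIntegrable (fun u => (1/(2*γ)) * (F u * Real.logb 2 (F u)
      + (1 - F u) * Real.logb 2 (1 - F u))) volume (-β) β := by
    have hsum : IntervalIntegrable (fun u => (F u / (2*γ)) * Real.logb 2 (F u / (2*γ))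
        + ((1 - F u) / (2*γ)) * Real.logb 2 ((1 - F u) / (2*γ)) + (1/(2*γ)) * Real.logb 2 (2*γ))
        volume (-β) β := (hi1.add hi2).add intervalIntegrable_const
    have : (fun u => (1/(2*γ)) * (F u * Real.logb 2 (F u)
        + (1 - F u) * Real.logb 2 (1 - F u)))
        = fun u => (F u / (2*γ)) * Real.logb 2 (F u / (2*γ))
          + ((1 - F u) / (2*γ)) * Real.logb 2 ((1 - F u) / (2*γ))
          + (1/(2*γ)) * Real.logb 2 (2*γ) := by
      funext u
      rw [hcomb u]
      ring
    rw [this]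
    exact hsum
  -- combine pieces 1 and 3
  have hP13 : (∫ u in (-β)..β, (F u / (2*γ)) * Real.logb 2 (F u / (2*γ)))
        + (∫ u in (-β)..β, ((1 - F u) / (2*γ)) * Real.logb 2 ((1 - F u) / (2*γ)))
      = (1/(2*γ)) * (∫ u in (-β)..β,
            (F u * Real.logb 2 (F u) + (1 - F u) * Real.logb 2 (1 - F u)))
        - (2*β) * ((1/(2*γ)) * Real.logb 2 (2*γ)) := by
    rw [← intervalIntegral.integral_add hi1 hi2]
    have hcg : ∀ u ∈ Set.uIcc (-β) β, (F u / (2*γ)) * Real.logb 2 (F u / (2*γ))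
        + ((1 - F u) / (2*γ)) * Real.logb 2 ((1 - F u) / (2*γ))
        = (fun u => (1/(2*γ)) * (F u * Real.logb 2 (F u) + (1 - F u) * Real.logb 2 (1 - F u))
          - (1/(2*γ)) * Real.logb 2 (2*γ)) u := fun u _ => hcomb u
    rw [intervalIntegral.integral_congr hcg,
      intervalIntegral.integral_sub hi3 intervalIntegrable_const,
      intervalIntegral.integral_const_mul, intervalIntegral.integral_const, smul_eq_mul]
    ring
  -- put everything together
  rw [key,
    ← intervalIntegral.integral_add_adjacent_intervals (a := -β - γ) (b := γ - β)
      (c := β + γ) (hii _ _) (hii _ _),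
    ← intervalIntegral.integral_add_adjacent_intervals (a := -β - γ) (b := β - γ)
      (c := γ - β) (hii _ _) (hii _ _),
    hpiece1, hpiece2, hpiece3]
  have hγinv : (2*γ) * (1/(2*γ)) = 1 := mul_one_div_cancel h2γ'
  linear_combination -hP13 + Real.logb 2 (2*γ) * hγinv
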